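/- Let f: ℝ → ℝ be a continuous function with f(x) → +∞ as x → +∞ and f(x) → -∞ as x → -∞. Define F(y) = sup_{x ≤ y} f(x). Then for every y ∈ ℝ, inf_{x ≥ y} (2F(x) - f(x)) = F(y). -/

import Mathlib

open Filter

/-- For continuous `f : ℝ → ℝ` with `f → +∞` at `+∞` and `f → -∞` at `-∞`,
setting `F y = sup_{x ≤ y} f x`, we have `inf_{x ≥ y} (2 F x - f x) = F y` for every `y`. -/
theorem stmt0 (f : ℝ → ℝ) (hf : Continuous f)
    (htop : Tendsto f atTop atTop) (hbot : Tendsto f atBot atBot)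
    (F : ℝ → ℝ) (hF : ∀ y, F y = sSup (f '' Set.Iic y)) (y : ℝ) :
    sInf ((fun x => 2 * F x - f x) '' Set.Ici y) = F y := by
  have hbdd : ∀ b : ℝ, BddAbove (f '' Set.Iic b) := by
    intro b
    obtain ⟨c, hc⟩ := eventually_atBot.mp (hbot.eventually (eventually_le_atBot (f b)))
    obtain ⟨M, hM⟩ := ((isCompact_Icc (a := min c b) (b := b)).image hf).bddAbove
    refine ⟨max M (f b), ?_⟩
    rintro v ⟨x, hx, rfl⟩
    rcases le_or_gt x c with h | h
    · exact le_max_of_le_right (hc x h)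
    · exact le_max_of_le_left (hM ⟨x, ⟨(min_le_left c b).trans h.le, hx⟩, rfl⟩)
  have hmono : ∀ a b : ℝ, a ≤ b → F a ≤ F b := by
    intro a b hab
    rw [hF, hF]
    exact csSup_le_csSup (hbdd b) ⟨f a, a, Set.mem_Iic.mpr le_rfl, rfl⟩
      (Set.image_mono (f := f) (Set.Iic_subset_Iic.mpr hab))
  have hle : ∀ x : ℝ, f x ≤ F x := fun x => by
    rw [hF]; exact le_csSup (hbdd x) ⟨x, Set.mem_Iic.mpr le_rfl, rfl⟩
  have key : ∃ z, y ≤ z ∧ f z = F y ∧ F z = F y := by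
    rcases eq_or_lt_of_le (hle y) with heq | h
    · exact ⟨y, le_rfl, heq, rfl⟩
    · obtain ⟨b, hb1, hb2⟩ :=
        ((htop.eventually (eventually_ge_atTop (F y))).and (eventually_ge_atTop y)).exists
      set T : Set ℝ := {x | y ≤ x ∧ F y ≤ f x} with hT
      have hTne : T.Nonempty := ⟨b, hb2, hb1⟩
      have hTbdd : BddBelow T := ⟨y, fun x hx => hx.1⟩
      have hTclosed : IsClosed T :=
        IsClosed.inter (isClosed_le continuous_const continuous_id)
          (isClosed_le continuous_const hf)
      set z := sInf T with hz
      have hzT : z ∈ T := hTclosed.csInf_mem hTne hTbdd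
      have hzy : y ≤ z := hzT.1
      have hz2 : F y ≤ f z := hzT.2
      have hylt : y < z := by
        rcases hzy.lt_or_eq with h' | h'
        · exact h'
        · exact absurd (h'.symm ▸ hz2) (not_le.mpr h)
      have hlt : ∀ x, y ≤ x → x < z → f x < F y := by
        intro x hx1 hx2
        by_contra hcon
        exact absurd (csInf_le hTbdd ⟨hx1, not_lt.mp hcon⟩) (not_le.mpr hx2)
      have hfz_le : f z ≤ F y := by
        have htend : Tendsto f (nhdsWithin z (Set.Iio z)) (nhds (f z)) :=
          (hf.tendsto z).mono_left nhdsWithin_le_nhds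
        refine le_of_tendsto htend ?_
        filter_upwards [Ioo_mem_nhdsLT_of_mem ⟨hylt, le_rfl⟩] with x hx
        exact (hlt x hx.1.le hx.2).le
      have hfz : f z = F y := le_antisymm hfz_le hz2
      refine ⟨z, hzy, hfz, le_antisymm ?_ (hmono y z hzy)⟩
      rw [hF z]
      refine csSup_le ⟨f z, z, Set.mem_Iic.mpr le_rfl, rfl⟩ ?_
      rintro v ⟨x, hx, rfl⟩
      rcases eq_or_lt_of_le (Set.mem_Iic.mp hx) with rfl | hx'
      · exact hfz.le
      · rcases le_or_gt x y with h1 | h1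
        · rw [hF y]; exact le_csSup (hbdd y) ⟨x, Set.mem_Iic.mpr h1, rfl⟩
        · exact (hlt x h1.le hx').le
  obtain ⟨z, hzy, hfz, hFz⟩ := key
  have hmem : F y ∈ (fun x => 2 * F x - f x) '' Set.Ici y :=
    ⟨z, hzy, by simp only [hFz, hfz]; ring⟩
  have hlb : ∀ v ∈ (fun x => 2 * F x - f x) '' Set.Ici y, F y ≤ v := by
    rintro v ⟨x, hx, rfl⟩
    have h1 := hmono y x hx
    have h2 := hle x
    simp only
    linarith
  exact le_antisymm (csInf_le ⟨F y, hlb⟩ hmem) (le_csInf ⟨_, hmem⟩ hlb)
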